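/- Let α, β, δ, h be positive reals satisfying (i) 1 + αδ > δ and (ii) δ(2+αδ) < (1+αδ)²(1+βδ). Then every complex root of the characteristic polynomial λ² − trace(J*)·λ + det(J*) of the NSFD Jacobian matrix J* at E* has modulus strictly less than 1; i.e., the interior fixed point E* of the NSFD discrete system is locally asymptotically stable for every step size h > 0. -/

import Mathlib

set_option maxHeartbeats 1000000

lemma jury (T D : ℝ) (hA : 0 < 1 - T + D) (hB : 0 < 1 + T + D) (hC : D < 1) :
    ∀ z : ℂ, z ^ 2 - (T : ℂ) * z + (D : ℂ) = 0 → ‖z‖ < 1 := by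
  intro z hz
  set x := z.re with hx
  set y := z.im with hy
  have hre : x ^ 2 - y ^ 2 - T * x + D = 0 := by
    have := congrArg Complex.re hz
    simpa [pow_two, Complex.mul_re, Complex.mul_im, hx, hy] using this
  have him : y * (2 * x - T) = 0 := by
    have := congrArg Complex.im hz
    simp [pow_two, Complex.mul_re, Complex.mul_im, hx, hy] at this
    nlinarith [this]
  have habs : ‖z‖ ^ 2 = x ^ 2 + y ^ 2 := by
    rw [Complex.sq_norm, Complex.normSq_apply]; ring
  have hlt : x ^ 2 + y ^ 2 < 1 := by
    rcases mul_eq_zero.mp him with hy0 | hT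
    · have hq : x ^ 2 - T * x + D = 0 := by nlinarith
      have hx2 : x ^ 2 < 1 := by
        rcases le_or_gt 1 x with hx1 | hx1
        · exfalso
          have hTx : 1 + x - T < 0 := by nlinarith
          nlinarith
        rcases le_or_gt x (-1) with hx1' | hx1'
        · exfalso
          have hTx : 1 + T - x < 0 := by nlinarith
          nlinarith
        · nlinarith
      nlinarith
    · have hT2 : T = 2 * x := by linarith
      nlinarith
  nlinarith [norm_nonneg z]


theorem stmt_9 (α β δ h : ℝ) (hα : 0 < α) (hβ : 0 < β) (hδ : 0 < δ) (hh : 0 < h)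
    (h1 : 1 + α * δ > δ)
    (h2 : δ * (2 + α * δ) < (1 + α * δ) ^ 2 * (1 + β * δ))
    (Nstar Pstar G H : ℝ)
    (hN : Nstar = (1 + α * δ - δ) / (1 + α * δ))
    (hP : Pstar = δ * Nstar)
    (hG : G = (1 + h + h * (Nstar + α * Pstar)) * (Nstar + α * Pstar))
    (hH : H = (1 + β * δ * h) * Nstar)
    (J : Matrix (Fin 2) (Fin 2) ℝ)
    (hJ : J = !![1 + Nstar * h * (1 - 2 * Nstar - α * δ * Nstar) / G,
                 Nstar * h * (α - α * Nstar - 1) / G;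
                 β * δ ^ 2 * h * Nstar / H,
                 1 - β * δ * h * Nstar / H]) :
    ∀ z : ℂ, z ^ 2 - ((Matrix.trace J : ℝ) : ℂ) * z + ((J.det : ℝ) : ℂ) = 0 →
      ‖z‖ < 1 := by
  have hA0 : (0:ℝ) < 1 + α * δ := by nlinarith
  have hAne : (1 + α * δ) ≠ 0 := ne_of_gt hA0
  have hK0 : (0:ℝ) < 1 + α * δ - δ := by linarith
  have hKne : (1 + α * δ - δ) ≠ 0 := ne_of_gt hK0
  have hS0 : (0:ℝ) < 1 + h + h * (1 + α * δ - δ) := by nlinarith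
  have hSne : (1 + h + h * (1 + α * δ - δ)) ≠ 0 := ne_of_gt hS0
  have hm0 : (0:ℝ) < 1 + β * δ * h := by nlinarith [mul_pos (mul_pos hβ hδ) hh]
  have hmne : (1 + β * δ * h) ≠ 0 := ne_of_gt hm0
  have hP0 : (0:ℝ) < (1 + α * δ) ^ 2 * (1 + h + h * (1 + α * δ - δ)) :=
    mul_pos (by positivity) hS0
  have hPne := ne_of_gt hP0
  -- simplified entries
  have hKne' : 1 + δ * α - δ ≠ 0 := by linarith
  have hSne' : 1 + h + h * (1 + δ * α - δ) ≠ 0 := by nlinarith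
  have hGv : G = (1 + h + h * (1 + α * δ - δ)) * (1 + α * δ - δ) := by
    rw [hG, hP, hN]; field_simp
  have hHv : H = (1 + β * δ * h) * (1 + α * δ - δ) / (1 + α * δ) := by
    rw [hH, hN]; field_simp
  have hA11 : 1 + Nstar * h * (1 - 2 * Nstar - α * δ * Nstar) / G
      = 1 + h * (δ * (2 + α * δ) - (1 + α * δ) ^ 2)
          / ((1 + α * δ) ^ 2 * (1 + h + h * (1 + α * δ - δ))) := by
    rw [hGv, hN]; field_simp; ring
  have hA12 : Nstar * h * (α - α * Nstar - 1) / G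
      = -(h / ((1 + α * δ) ^ 2 * (1 + h + h * (1 + α * δ - δ)))) := by
    rw [hGv, hN]; field_simp; ring
  have hA21 : β * δ ^ 2 * h * Nstar / H = β * δ ^ 2 * h / (1 + β * δ * h) := by
    rw [hHv, hN]; field_simp
  have hA22 : 1 - β * δ * h * Nstar / H = 1 / (1 + β * δ * h) := by
    rw [hHv, hN]; field_simp; ring
  have hT : Matrix.trace J
      = (1 + h * (δ * (2 + α * δ) - (1 + α * δ) ^ 2)
          / ((1 + α * δ) ^ 2 * (1 + h + h * (1 + α * δ - δ))) + 1 / (1 + β * δ * h)) := by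
    rw [hJ, Matrix.trace_fin_two_of, hA11, hA22]
  have hD : J.det
      = ((1 + α * δ) ^ 2 * (1 + h + h * (1 + α * δ - δ))
          + h * (δ * (2 + α * δ) - (1 + α * δ) ^ 2) + β * δ ^ 2 * h ^ 2)
        / ((1 + α * δ) ^ 2 * (1 + h + h * (1 + α * δ - δ)) * (1 + β * δ * h)) := by
    rw [hJ, Matrix.det_fin_two_of, hA11, hA12, hA21, hA22]
    field_simp
    ring
  rw [hT, hD]
  apply jury
  · -- 1 - T + D > 0
    have key : 1 - (1 + h * (δ * (2 + α * δ) - (1 + α * δ) ^ 2)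
          / ((1 + α * δ) ^ 2 * (1 + h + h * (1 + α * δ - δ))) + 1 / (1 + β * δ * h))
        + ((1 + α * δ) ^ 2 * (1 + h + h * (1 + α * δ - δ))
          + h * (δ * (2 + α * δ) - (1 + α * δ) ^ 2) + β * δ ^ 2 * h ^ 2)
        / ((1 + α * δ) ^ 2 * (1 + h + h * (1 + α * δ - δ)) * (1 + β * δ * h))
        = β * δ * h ^ 2 * ((1 + α * δ) * (1 + α * δ - δ))
        / ((1 + α * δ) ^ 2 * (1 + h + h * (1 + α * δ - δ)) * (1 + β * δ * h)) := by
      field_simp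
      ring
    rw [key]
    apply div_pos _ (by positivity)
    have := mul_pos hA0 hK0
    positivity
  · -- 1 + T + D > 0
    have key : 1 + (1 + h * (δ * (2 + α * δ) - (1 + α * δ) ^ 2)
          / ((1 + α * δ) ^ 2 * (1 + h + h * (1 + α * δ - δ))) + 1 / (1 + β * δ * h))
        + ((1 + α * δ) ^ 2 * (1 + h + h * (1 + α * δ - δ))
          + h * (δ * (2 + α * δ) - (1 + α * δ) ^ 2) + β * δ ^ 2 * h ^ 2)
        / ((1 + α * δ) ^ 2 * (1 + h + h * (1 + α * δ - δ)) * (1 + β * δ * h))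
        = ((2 * ((1 + α * δ) ^ 2 * (1 + h + h * (1 + α * δ - δ)))
            + h * (δ * (2 + α * δ) - (1 + α * δ) ^ 2)) * ((1 + β * δ * h) + 1)
            + β * δ ^ 2 * h ^ 2)
        / ((1 + α * δ) ^ 2 * (1 + h + h * (1 + α * δ - δ)) * (1 + β * δ * h)) := by
      field_simp
      ring
    rw [key]
    apply div_pos _ (by positivity)
    have g1 : 0 < 2 * ((1 + α * δ) ^ 2 * (1 + h + h * (1 + α * δ - δ)))
        + h * (δ * (2 + α * δ) - (1 + α * δ) ^ 2) := by
      nlinarith [mul_pos (mul_pos (by positivity : (0:ℝ) < (1 + α * δ) ^ 2) hh) hK0,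
        mul_pos (by positivity : (0:ℝ) < (1 + α * δ) ^ 2) hh,
        mul_pos hh (mul_pos hδ (by linarith : (0:ℝ) < 2 + α * δ))]
    nlinarith [mul_pos g1 (by linarith : (0:ℝ) < (1 + β * δ * h) + 1),
      mul_pos (mul_pos hβ (mul_pos hδ hδ)) (mul_pos hh hh)]
  · -- D < 1
    rw [div_lt_one (by positivity)]
    have f1 : 0 < h * (1 + α * δ) ^ 2 + h * (1 + α * δ) ^ 2 * (β * δ)
        - h * (δ * (2 + α * δ)) := by nlinarith
    have f3 : 0 < β * δ * h ^ 2 * ((1 + α * δ) ^ 2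
        + (1 + α * δ) ^ 2 * (1 + α * δ - δ) - δ) := by
      have g : 0 < (1 + α * δ) ^ 2 + (1 + α * δ) ^ 2 * (1 + α * δ - δ) - δ := by
        nlinarith [mul_pos (by positivity : (0:ℝ) < (1 + α * δ) ^ 2) hK0]
      exact mul_pos (by positivity) g
    nlinarith [f1, f3]
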